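/- Unbiasedness with effective learning rate: under on-policy sampling of G > 1 i.i.d. outputs from π_φ, with effective reward r̃_φ(o) = r(o) + (α/N)log(π_θ(o)/π_φ(o)) and advantages Ã_i = r̃_φ(o_i) − mean_j r̃_φ(o_j), the scaled gradient estimate (G/(G−1)) · E[(1/G)Σ_i Ã_i ∇_φ log π_φ(o_i)] equals ∇_φ E_{o∼π_φ}[r̃_φ(o)] (the true policy gradient of J(φ) = E_{o∼π_φ}[r̃_φ(o)]). -/

import Mathlib

lemma margA {O : Type*} [Fintype O] {G : ℕ} (p h : O → ℝ) (hp : ∑ o, p o = 1) (i : Fin G) :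
    ∑ ω : Fin G → O, (∏ k, p (ω k)) * h (ω i) = ∑ o, p o * h o := by
  have key := Finset.prod_univ_sum (fun _ : Fin G => (Finset.univ : Finset O))
      (fun k o => p o * (if k = i then h o else 1))
  rw [Fintype.piFinset_univ] at key
  have h1 : ∀ ω : Fin G → O, (∏ k, p (ω k)) * h (ω i)
      = ∏ k, (p (ω k) * (if k = i then h (ω k) else 1)) := by
    intro ω
    rw [Finset.prod_mul_distrib]
    congr 1
    simp
  calc ∑ ω : Fin G → O, (∏ k, p (ω k)) * h (ω i)
      = ∑ ω : Fin G → O, ∏ k, (p (ω k) * (if k = i then h (ω k) else 1)) :=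
        Finset.sum_congr rfl fun ω _ => h1 ω
    _ = ∏ k, ∑ o, (p o * (if k = i then h o else 1)) := key.symm
    _ = ∑ o, p o * h o := by
        rw [Finset.prod_eq_single i]
        · simp
        · intro k _ hk
          simp [hk, hp]
        · simp

lemma margB {O : Type*} [Fintype O] {G : ℕ} (p u v : O → ℝ) (hp : ∑ o, p o = 1)
    {i j : Fin G} (hij : i ≠ j) :
    ∑ ω : Fin G → O, (∏ k, p (ω k)) * (u (ω i) * v (ω j))
      = (∑ o, p o * u o) * (∑ o, p o * v o) := by
  have key := Finset.prod_univ_sum (fun _ : Fin G => (Finset.univ : Finset O))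
      (fun k o => p o * ((if k = i then u o else 1) * (if k = j then v o else 1)))
  rw [Fintype.piFinset_univ] at key
  have h1 : ∀ ω : Fin G → O, (∏ k, p (ω k)) * (u (ω i) * v (ω j))
      = ∏ k, (p (ω k) * ((if k = i then u (ω k) else 1) * (if k = j then v (ω k) else 1))) := by
    intro ω
    rw [Finset.prod_mul_distrib, Finset.prod_mul_distrib]
    simp
  rw [Finset.sum_congr rfl fun ω _ => h1 ω, ← key]
  rw [← Finset.mul_prod_erase Finset.univ _ (Finset.mem_univ i),
      ← Finset.mul_prod_erase _ _ (Finset.mem_erase.mpr ⟨hij.symm, Finset.mem_univ j⟩)]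
  have hrest : ∏ k ∈ (Finset.univ.erase i).erase j,
      (∑ o, p o * ((if k = i then u o else 1) * (if k = j then v o else 1))) = 1 := by
    apply Finset.prod_eq_one
    intro k hk
    have h2 := Finset.mem_erase.mp hk
    have h3 := Finset.mem_erase.mp h2.2
    simp [h2.1, h3.1, hp]
  rw [hrest]
  simp [hij, hij.symm]

lemma scalar_key {O : Type*} [Fintype O] {G : ℕ} (hG : 1 < G) (p f s : O → ℝ)
    (hp : ∑ o, p o = 1) (hs : ∑ o, p o * s o = 0) :
    ((G : ℝ) / ((G : ℝ) - 1)) *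
      ∑ ω : Fin G → O, (∏ k, p (ω k)) *
        ((G : ℝ)⁻¹ * ∑ i, (f (ω i) - (G : ℝ)⁻¹ * ∑ j, f (ω j)) * s (ω i))
    = ∑ o, p o * (f o * s o) := by
  have hGne : (G : ℝ) ≠ 0 := by positivity
  have hG1 : (G : ℝ) - 1 ≠ 0 := by
    have : (1 : ℝ) < (G : ℝ) := by exact_mod_cast hG
    linarith
  set A := ∑ o, p o * (f o * s o) with hA
  have inner : ∀ i : Fin G,
      ∑ ω : Fin G → O, (∏ k, p (ω k)) * (f (ω i) * s (ω i)) = A :=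
    fun i => margA p (fun o => f o * s o) hp i
  have cross : ∀ i j : Fin G,
      ∑ ω : Fin G → O, (∏ k, p (ω k)) * (f (ω j) * s (ω i))
        = if j = i then A else 0 := by
    intro i j
    by_cases h : j = i
    · subst h; rw [if_pos rfl]; exact inner j
    · rw [if_neg h, margB p f s hp h, hs, mul_zero]
  have expand : ∀ ω : Fin G → O,
      (∏ k, p (ω k)) * ((G : ℝ)⁻¹ * ∑ i, (f (ω i) - (G : ℝ)⁻¹ * ∑ j, f (ω j)) * s (ω i))
      = (G : ℝ)⁻¹ * ∑ i, ((∏ k, p (ω k)) * (f (ω i) * s (ω i))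
          - (G : ℝ)⁻¹ * ∑ j, (∏ k, p (ω k)) * (f (ω j) * s (ω i))) := by
    intro ω
    simp only [Finset.mul_sum]
    refine Finset.sum_congr rfl fun i _ => ?_
    have hj : ∑ j, (G : ℝ)⁻¹ * ((∏ k, p (ω k)) * (f (ω j) * s (ω i)))
        = (∑ j, (G : ℝ)⁻¹ * f (ω j)) * ((∏ k, p (ω k)) * s (ω i)) := by
      rw [Finset.sum_mul]
      exact Finset.sum_congr rfl fun j _ => by ring
    rw [hj]
    ring
  calc ((G : ℝ) / ((G : ℝ) - 1)) *
      ∑ ω : Fin G → O, (∏ k, p (ω k)) *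
        ((G : ℝ)⁻¹ * ∑ i, (f (ω i) - (G : ℝ)⁻¹ * ∑ j, f (ω j)) * s (ω i))
      = ((G : ℝ) / ((G : ℝ) - 1)) * ((G : ℝ)⁻¹ *
          ∑ ω : Fin G → O, ∑ i, ((∏ k, p (ω k)) * (f (ω i) * s (ω i))
            - (G : ℝ)⁻¹ * ∑ j, (∏ k, p (ω k)) * (f (ω j) * s (ω i)))) := by
        congr 1
        rw [Finset.mul_sum]
        exact Finset.sum_congr rfl fun ω _ => expand ω
    _ = ((G : ℝ) / ((G : ℝ) - 1)) * ((G : ℝ)⁻¹ *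
          ∑ i : Fin G, ∑ ω : Fin G → O, ((∏ k, p (ω k)) * (f (ω i) * s (ω i))
            - (G : ℝ)⁻¹ * ∑ j, (∏ k, p (ω k)) * (f (ω j) * s (ω i)))) := by
        rw [Finset.sum_comm]
    _ = ((G : ℝ) / ((G : ℝ) - 1)) * ((G : ℝ)⁻¹ *
          ∑ i : Fin G, (A - (G : ℝ)⁻¹ * A)) := by
        congr 1
        congr 1
        refine Finset.sum_congr rfl fun i _ => ?_
        rw [Finset.sum_sub_distrib, inner i]
        congr 1
        rw [← Finset.mul_sum, Finset.sum_comm]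
        congr 1
        rw [Finset.sum_congr rfl fun j _ => cross i j]
        simp
    _ = A := by
        rw [Finset.sum_const, Finset.card_univ, Fintype.card_fin, nsmul_eq_mul]
        field_simp


/-- Unbiasedness with effective learning rate: with effective reward
`r̃_φ(o) = r(o) + (α/N) log(π_θ(o)/π_φ(o))` and mean-centered advantages over
`G` i.i.d. on-policy samples, the gradient estimate scaled by `G/(G−1)` equals
the true policy gradient `∇_φ E_{o∼π_φ}[r̃_φ(o)]`. -/
theorem codistill_unbiased_with_effective_lr
    {O : Type*} [Fintype O] {d : ℕ}
    (π : EuclideanSpace ℝ (Fin d) → O → ℝ)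
    (πθ : O → ℝ)
    (hpos : ∀ φ o, 0 < π φ o)
    (hθpos : ∀ o, 0 < πθ o)
    (hsum : ∀ φ, ∑ o, π φ o = 1)
    (hθsum : ∑ o, πθ o = 1)
    (hdiff : ∀ o, Differentiable ℝ (fun φ => π φ o))
    (r : O → ℝ) (α N : ℝ) (hα : 0 < α) (hN : 0 < N)
    (G : ℕ) (hG : 1 < G)
    (φ : EuclideanSpace ℝ (Fin d)) :
    ((G : ℝ) / ((G : ℝ) - 1)) •
        ∑ ω : Fin G → O, (∏ k, π φ (ω k)) •
          ((G : ℝ)⁻¹ • ∑ i,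
            ((r (ω i) + (α / N) * Real.log (πθ (ω i) / π φ (ω i)))
              - (G : ℝ)⁻¹ * ∑ j, (r (ω j) + (α / N) * Real.log (πθ (ω j) / π φ (ω j)))) •
              fderiv ℝ (fun ψ => Real.log (π ψ (ω i))) φ)
      = fderiv ℝ
          (fun ψ => ∑ o, π ψ o * (r o + (α / N) * Real.log (πθ o / π ψ o))) φ := by
  set Dp : O → (EuclideanSpace ℝ (Fin d) →L[ℝ] ℝ) :=
    fun o => fderiv ℝ (fun ψ => π ψ o) φ with hDpdef
  have hDp : ∀ o, HasFDerivAt (fun ψ => π ψ o) (Dp o) φ :=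
    fun o => ((hdiff o) φ).hasFDerivAt
  have hlog : ∀ o, HasFDerivAt (fun ψ => Real.log (π ψ o)) ((π φ o)⁻¹ • Dp o) φ :=
    fun o => (hDp o).log (hpos φ o).ne'
  have hSf : ∀ o, fderiv ℝ (fun ψ => Real.log (π ψ o)) φ = (π φ o)⁻¹ • Dp o :=
    fun o => (hlog o).fderiv
  have hDsum : ∑ o, Dp o = 0 := by
    have h1 : HasFDerivAt (fun ψ => ∑ o, π ψ o) (∑ o, Dp o) φ :=
      HasFDerivAt.fun_sum (fun o _ => hDp o)
    rw [show (fun ψ => ∑ o, π ψ o) = (fun _ : EuclideanSpace ℝ (Fin d) => (1:ℝ))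
      from funext fun ψ => hsum ψ] at h1
    exact h1.unique (hasFDerivAt_const 1 φ)
  -- derivative of each summand of J
  have hterm : ∀ o : O, HasFDerivAt
      (fun ψ => π ψ o * (r o + (α / N) * Real.log (πθ o / π ψ o)))
      (((r o + (α / N) * Real.log (πθ o / π φ o)) - α / N) • Dp o) φ := by
    intro o
    have hfun : (fun ψ => π ψ o * (r o + (α / N) * Real.log (πθ o / π ψ o)))
        = fun ψ => π ψ o * (r o + (α / N) * (Real.log (πθ o) - Real.log (π ψ o))) := by
      funext ψ
      rw [Real.log_div (hθpos o).ne' (hpos ψ o).ne']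
    rw [hfun]
    have h2 : HasFDerivAt
        (fun ψ => r o + (α / N) * (Real.log (πθ o) - Real.log (π ψ o)))
        ((α / N) • -((π φ o)⁻¹ • Dp o)) φ :=
      (((hlog o).const_sub (Real.log (πθ o))).const_mul (α / N)).const_add (r o)
    have h3 := (hDp o).mul h2
    have heq : π φ o • ((α / N) • -((π φ o)⁻¹ • Dp o))
        + (r o + (α / N) * (Real.log (πθ o) - Real.log (π φ o))) • Dp o
        = ((r o + (α / N) * Real.log (πθ o / π φ o)) - α / N) • Dp o := by
      have h := (hpos φ o).ne'
      rw [Real.log_div (hθpos o).ne' (hpos φ o).ne']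
      rw [smul_neg, smul_neg, smul_smul, smul_smul,
        show π φ o * (α / N) * (π φ o)⁻¹ = α / N from by field_simp,
        show (r o + α / N * (Real.log (πθ o) - Real.log (π φ o)) - α / N) • Dp o
          = (r o + α / N * (Real.log (πθ o) - Real.log (π φ o))) • Dp o - (α / N) • Dp o
          from sub_smul (r o + α / N * (Real.log (πθ o) - Real.log (π φ o))) (α / N) (Dp o)]
      abel
    rw [heq] at h3
    exact h3
  have hJ : HasFDerivAt
      (fun ψ => ∑ o, π ψ o * (r o + (α / N) * Real.log (πθ o / π ψ o)))
      (∑ o, (((r o + (α / N) * Real.log (πθ o / π φ o)) - α / N) • Dp o)) φ :=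
    HasFDerivAt.fun_sum (fun o _ => hterm o)
  rw [hJ.fderiv]
  have hRHS : ∑ o, (((r o + (α / N) * Real.log (πθ o / π φ o)) - α / N) • Dp o)
      = ∑ o, (r o + (α / N) * Real.log (πθ o / π φ o)) • Dp o := by
    simp only [show ∀ o, ((r o + (α / N) * Real.log (πθ o / π φ o)) - α / N) • Dp o
        = (r o + (α / N) * Real.log (πθ o / π φ o)) • Dp o - (α / N) • Dp o
        from fun o => sub_smul (r o + (α / N) * Real.log (πθ o / π φ o)) (α / N) (Dp o), Finset.sum_sub_distrib, ← Finset.smul_sum, hDsum, smul_zero,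
      sub_zero]
  rw [hRHS]
  simp only [hSf]
  ext x
  simp only [ContinuousLinearMap.smul_apply, ContinuousLinearMap.coe_sum', Finset.sum_apply,
    smul_eq_mul]
  have hq : ∑ o, Dp o x = 0 := by
    rw [← ContinuousLinearMap.sum_apply, hDsum]
    simp
  have hs : ∑ o, π φ o * ((π φ o)⁻¹ * Dp o x) = 0 := by
    have hc : ∀ o : O, π φ o * ((π φ o)⁻¹ * Dp o x) = Dp o x := by
      intro o
      rw [show π φ o * ((π φ o)⁻¹ * Dp o x) = Dp o x * (π φ o * (π φ o)⁻¹) from by ring,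
        mul_inv_cancel₀ (hpos φ o).ne', mul_one]
    rw [Finset.sum_congr rfl fun o _ => hc o]
    exact hq
  have key := scalar_key hG (π φ)
    (fun o => r o + (α / N) * Real.log (πθ o / π φ o))
    (fun o => (π φ o)⁻¹ * Dp o x) (hsum φ) hs
  rw [show (∑ o, π φ o * ((r o + (α / N) * Real.log (πθ o / π φ o)) * ((π φ o)⁻¹ * Dp o x)))
      = ∑ o, (r o + (α / N) * Real.log (πθ o / π φ o)) * Dp o x from
    Finset.sum_congr rfl fun o _ => by
      rw [show π φ o * ((r o + (α / N) * Real.log (πθ o / π φ o)) * ((π φ o)⁻¹ * Dp o x))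
          = (r o + (α / N) * Real.log (πθ o / π φ o)) * Dp o x * (π φ o * (π φ o)⁻¹) from by
        ring, mul_inv_cancel₀ (hpos φ o).ne', mul_one]] at key
  convert key using 2
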